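/- arXiv:0808.3533 — 3 statements merged into one kernel-verified Lean document; each statement's English description precedes it below -/
import Mathlib

section
/- If Delta = 4AC - B^2 > 0 and A ≠ 0, then x± = (B ± i√Delta)/(2A) are the two (complex conjugate) roots of A x^2 - B x + C = 0, and x(p1-x)(p2-x)(p3-x) = -(x-v1)(x-v2)(x-v3)(x-v4) holds at x = x±. -/
open Complex

theorem complex_saddle_points
    (j1 j2 j3 J1 J2 J3 v1 v2 v3 v4 p1 p2 p3 A B C Δ : ℝ)
    (hv1 : v1 = j1 + j2 + j3) (hv2 : v2 = J1 + j2 + J3)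
    (hv3 : v3 = J1 + J2 + j3) (hv4 : v4 = j1 + J2 + J3)
    (hp1 : p1 = j2 + J2 + j3 + J3) (hp2 : p2 = j1 + J1 + j3 + J3)
    (hp3 : p3 = j2 + J2 + j1 + J1)
    (hA : A = -(p1*p2 + p1*p3 + p2*p3) + (v1*v2 + v1*v3 + v1*v4 + v2*v3 + v2*v4 + v3*v4))
    (hB : B = -(p1*p2*p3) + (v1*v2*v3 + v1*v2*v4 + v1*v3*v4 + v2*v3*v4))
    (hC : C = v1*v2*v3*v4)
    (hΔ : Δ = 4*A*C - B^2) (hΔpos : 0 < Δ) (hA0 : A ≠ 0) :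
    ∀ x : ℂ, (x = ((B : ℂ) + I * Real.sqrt Δ) / (2 * A) ∨
              x = ((B : ℂ) - I * Real.sqrt Δ) / (2 * A)) →
      (A * x^2 - B * x + C = 0 ∧
       x * ((p1 : ℂ) - x) * ((p2 : ℂ) - x) * ((p3 : ℂ) - x)
         = -((x - v1) * (x - v2) * (x - v3) * (x - v4))) := by
  intro x hx
  have hA0' : (A : ℂ) ≠ 0 := by exact_mod_cast hA0
  have h2A : (2 * (A : ℂ)) ≠ 0 := by simp [hA0']
  have hs : ((Real.sqrt Δ : ℝ) : ℂ)^2 = (Δ : ℂ) := by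
    norm_cast
    exact Real.sq_sqrt hΔpos.le
  have hΔ' : ((Δ:ℝ):ℂ) = 4*A*C - B^2 := by push_cast [hΔ]; ring
  have hroot : (A : ℂ) * x^2 - B * x + C = 0 := by
    rcases hx with h | h <;> subst h <;> field_simp <;>
      linear_combination I^2*hs + (Δ:ℂ)*I_sq - hΔ'
  refine ⟨hroot, ?_⟩
  have key : x * ((p1 : ℂ) - x) * ((p2 : ℂ) - x) * ((p3 : ℂ) - x)
      + (x - v1) * (x - v2) * (x - v3) * (x - v4)
      = (A : ℂ) * x^2 - B * x + C := by
    subst hv1 hv2 hv3 hv4 hp1 hp2 hp3 hA hB hC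
    push_cast
    ring
  linear_combination key + hroot
end

section
/- With the vᵢ, pⱼ, A, B, C as in the Racah 6j setup, the following identity of real numbers holds: (A v1² - B v1 + C)(A v4² - B v4 + C) / ((A p2² - B p2 + C)(A p3² - B p3 + C)) = (j1+J2+J3)(-j1+J2+J3)(j1+j2+j3)(-j1+j2+j3) / ((j1+J2-J3)(j1-J2+J3)(j1+j2-j3)(j1-j2+j3)), provided all denominators are nonzero. -/
theorem real_part_cancellation
    (j1 j2 j3 J1 J2 J3 v1 v2 v3 v4 p1 p2 p3 A B C : ℝ)
    (hv1 : v1 = j1 + j2 + j3) (hv2 : v2 = J1 + j2 + J3)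
    (hv3 : v3 = J1 + J2 + j3) (hv4 : v4 = j1 + J2 + J3)
    (hp1 : p1 = j2 + J2 + j3 + J3) (hp2 : p2 = j1 + J1 + j3 + J3)
    (hp3 : p3 = j2 + J2 + j1 + J1)
    (hA : A = (v1*v2 + v1*v3 + v1*v4 + v2*v3 + v2*v4 + v3*v4) - (p1*p2 + p1*p3 + p2*p3))
    (hB : B = (v1*v2*v3 + v1*v2*v4 + v1*v3*v4 + v2*v3*v4) - p1*p2*p3)
    (hC : C = v1*v2*v3*v4)
    (hden1 : (A*p2^2 - B*p2 + C) * (A*p3^2 - B*p3 + C) ≠ 0)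
    (hden2 : (j1+J2-J3)*(j1-J2+J3)*(j1+j2-j3)*(j1-j2+j3) ≠ 0) :
    (A*v1^2 - B*v1 + C) * (A*v4^2 - B*v4 + C)
      / ((A*p2^2 - B*p2 + C) * (A*p3^2 - B*p3 + C))
    = (j1+J2+J3)*(-j1+J2+J3)*(j1+j2+j3)*(-j1+j2+j3)
      / ((j1+J2-J3)*(j1-J2+J3)*(j1+j2-j3)*(j1-j2+j3)) := by
  rw [div_eq_div_iff hden1 hden2]
  subst hv1 hv2 hv3 hv4 hp1 hp2 hp3 hA hB hC
  ring
end

section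
/- The triangle-coefficient asymptotics: for fixed positive reals j1, j2, j3 satisfying the strict triangle inequalities, as k → ∞ through integers, Δ(kj1,kj2,kj3) := (kj1+kj2-kj3)!(kj1-kj2+kj3)!(-kj1+kj2+kj3)! / (kj1+kj2+kj3+1)! is asymptotic to 2π · [(j1+j2-j3)(j1-j2+j3)(-j1+j2+j3)/(j1+j2+j3)³]^{1/2} · e^{k[(j1+j2-j3)ln(j1+j2-j3)+(j1-j2+j3)ln(j1-j2+j3)+(-j1+j2+j3)ln(-j1+j2+j3)-(j1+j2+j3)ln(j1+j2+j3)]}, i.e., the ratio of the two sides tends to 1. -/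
open Filter Real Topology

lemma pow_div_exp_eq (n : ℕ) (hn : 0 < (n:ℝ)) :
    ((n:ℝ)/Real.exp 1)^n = Real.exp ((n:ℝ) * (Real.log n - 1)) := by
  rw [← Real.exp_log (show (0:ℝ) < (n:ℝ)/Real.exp 1 by positivity), ← Real.exp_nat_mul,
    Real.log_div hn.ne' (Real.exp_ne_zero 1), Real.log_exp]

lemma fact_decomp (n : ℕ) (hn : 1 ≤ n) :
    (n.factorial : ℝ) = Stirling.stirlingSeq n * (Real.sqrt (2*n) * ((n:ℝ)/Real.exp 1)^n) := by
  have h0 : (0:ℝ) < (n:ℝ) := by exact_mod_cast hn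
  rw [Stirling.stirlingSeq, div_mul_cancel₀]
  positivity

lemma key_alg (K t1 t2 t3 : ℝ) (hK : 0 < K) (h1 : 0 < t1) (h2 : 0 < t2) (h3 : 0 < t3)
    (A B C D : ℕ) (hA : (A:ℝ) = K*t1) (hB : (B:ℝ) = K*t2) (hC : (C:ℝ) = K*t3)
    (hD : (D:ℝ) = K*(t1+t2+t3)) :
    (Real.sqrt (2*A) * ((A:ℝ)/Real.exp 1)^A) * (Real.sqrt (2*B) * ((B:ℝ)/Real.exp 1)^B)
      * (Real.sqrt (2*C) * ((C:ℝ)/Real.exp 1)^C)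
    / (((D:ℝ)+1) * (Real.sqrt (2*D) * ((D:ℝ)/Real.exp 1)^D))
    / (2*π*Real.sqrt (t1*t2*t3/(t1+t2+t3)^3)
        * Real.exp (K * (t1*Real.log t1 + t2*Real.log t2 + t3*Real.log t3
            - (t1+t2+t3)*Real.log (t1+t2+t3))))
    = K*(t1+t2+t3) / (π * (K*(t1+t2+t3)+1)) := by
  have hT : 0 < t1+t2+t3 := by linarith
  have hA0 : (0:ℝ) < A := by rw [hA]; positivity
  have hB0 : (0:ℝ) < B := by rw [hB]; positivity
  have hC0 : (0:ℝ) < C := by rw [hC]; positivity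
  have hD0 : (0:ℝ) < D := by rw [hD]; positivity
  rw [pow_div_exp_eq A hA0, pow_div_exp_eq B hB0, pow_div_exp_eq C hC0, pow_div_exp_eq D hD0]
  have hsqrt : Real.sqrt (2*(A:ℝ)) * Real.sqrt (2*(B:ℝ)) * Real.sqrt (2*(C:ℝ))
      = 2*K*(t1+t2+t3) * (Real.sqrt (2*(D:ℝ)) * Real.sqrt (t1*t2*t3/(t1+t2+t3)^3)) := by
    rw [← Real.sqrt_mul (by positivity), ← Real.sqrt_mul (by positivity),
      ← Real.sqrt_mul (by positivity)]
    rw [show (2*K*(t1+t2+t3) : ℝ) = Real.sqrt ((2*K*(t1+t2+t3))^2) from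
      (Real.sqrt_sq (by positivity)).symm, ← Real.sqrt_mul (by positivity)]
    congr 1
    rw [hA, hB, hC, hD]
    field_simp
  have hexp : Real.exp ((A:ℝ)*(Real.log A - 1)) * Real.exp ((B:ℝ)*(Real.log B - 1))
      * Real.exp ((C:ℝ)*(Real.log C - 1))
      = Real.exp ((D:ℝ)*(Real.log D - 1))
        * Real.exp (K * (t1*Real.log t1 + t2*Real.log t2 + t3*Real.log t3
            - (t1+t2+t3)*Real.log (t1+t2+t3))) := by
    rw [← Real.exp_add, ← Real.exp_add, ← Real.exp_add]
    congr 1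
    rw [hA, hB, hC, hD, Real.log_mul hK.ne' h1.ne', Real.log_mul hK.ne' h2.ne',
      Real.log_mul hK.ne' h3.ne', Real.log_mul hK.ne' hT.ne']
    ring
  have hq : (0:ℝ) < Real.sqrt (t1*t2*t3/(t1+t2+t3)^3) := Real.sqrt_pos.mpr (by positivity)
  have hsd : (0:ℝ) < Real.sqrt (2*(D:ℝ)) := Real.sqrt_pos.mpr (by positivity)
  rw [div_div, div_eq_div_iff (by positivity) (by positivity)]
  linear_combination (π * (K*(t1+t2+t3)+1)
      * (Real.exp ((A:ℝ)*(Real.log A - 1)) * Real.exp ((B:ℝ)*(Real.log B - 1))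
        * Real.exp ((C:ℝ)*(Real.log C - 1)))) * hsqrt
    + (π * (K*(t1+t2+t3)+1) * (2*K*(t1+t2+t3)
        * (Real.sqrt (2*(D:ℝ)) * Real.sqrt (t1*t2*t3/(t1+t2+t3)^3)))) * hexp
    + (-(2*π*(K*(t1+t2+t3)) * (Real.sqrt (2*(D:ℝ)) * Real.sqrt (t1*t2*t3/(t1+t2+t3)^3))
        * Real.exp ((D:ℝ)*(Real.log D - 1))
        * Real.exp (K * (t1*Real.log t1 + t2*Real.log t2 + t3*Real.log t3
            - (t1+t2+t3)*Real.log (t1+t2+t3))))) * hD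

theorem tca_aux (t1 t2 t3 T : ℝ) (h1 : 0 < t1) (h2 : 0 < t2) (h3 : 0 < t3)
    (hTeq : T = t1+t2+t3)
    (k : ℕ → ℕ) (hk : Tendsto k atTop atTop) (A B C D : ℕ → ℕ)
    (hA : ∀ n, (A n : ℝ) = (k n : ℝ) * t1) (hB : ∀ n, (B n : ℝ) = (k n : ℝ) * t2)
    (hC : ∀ n, (C n : ℝ) = (k n : ℝ) * t3) (hD : ∀ n, (D n : ℝ) = (k n : ℝ) * T) :
    Tendsto (fun n =>
      (((A n).factorial * (B n).factorial * (C n).factorial : ℝ)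
        / ((D n + 1).factorial : ℝ))
      / (2 * π * Real.sqrt (t1*t2*t3 / T^3)
        * Real.exp ((k n : ℝ) *
            (t1 * Real.log t1 + t2 * Real.log t2 + t3 * Real.log t3 - T * Real.log T))))
      atTop (nhds 1) := by
  subst hTeq
  have hT : 0 < t1+t2+t3 := by linarith
  have hkR : Tendsto (fun n => (k n : ℝ)) atTop atTop := tendsto_natCast_atTop_atTop.comp hk
  have hAt : Tendsto A atTop atTop :=
    tendsto_natCast_atTop_iff.mp (((hkR.atTop_mul_const h1)).congr (fun n => (hA n).symm))
  have hBt : Tendsto B atTop atTop :=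
    tendsto_natCast_atTop_iff.mp (((hkR.atTop_mul_const h2)).congr (fun n => (hB n).symm))
  have hCt : Tendsto C atTop atTop :=
    tendsto_natCast_atTop_iff.mp (((hkR.atTop_mul_const h3)).congr (fun n => (hC n).symm))
  have hDt : Tendsto D atTop atTop :=
    tendsto_natCast_atTop_iff.mp (((hkR.atTop_mul_const hT)).congr (fun n => (hD n).symm))
  have sA := Stirling.tendsto_stirlingSeq_sqrt_pi.comp hAt
  have sB := Stirling.tendsto_stirlingSeq_sqrt_pi.comp hBt
  have sC := Stirling.tendsto_stirlingSeq_sqrt_pi.comp hCt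
  have sD := Stirling.tendsto_stirlingSeq_sqrt_pi.comp hDt
  have hx : Tendsto (fun n => (k n : ℝ)*(t1+t2+t3)) atTop atTop := hkR.atTop_mul_const hT
  have l5 : Tendsto (fun n => (k n:ℝ)*(t1+t2+t3) / (π * ((k n:ℝ)*(t1+t2+t3)+1)))
      atTop (𝓝 π⁻¹) := by
    have hinv : Tendsto (fun n => ((k n:ℝ)*(t1+t2+t3)+1)⁻¹) atTop (𝓝 0) :=
      tendsto_inv_atTop_zero.comp (tendsto_atTop_add_const_right atTop 1 hx)
    have l5' : Tendsto (fun n => π⁻¹ * (1 - ((k n:ℝ)*(t1+t2+t3)+1)⁻¹)) atTop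
        (𝓝 (π⁻¹ * (1 - 0))) := tendsto_const_nhds.mul (tendsto_const_nhds.sub hinv)
    rw [sub_zero, mul_one] at l5'
    refine l5'.congr' ?_
    filter_upwards [hx.eventually_ge_atTop 1] with n hn
    have hpos : (0:ℝ) < (k n:ℝ)*(t1+t2+t3)+1 := by linarith
    field_simp
    ring
  have hπs : Real.sqrt π ≠ 0 := ne_of_gt (Real.sqrt_pos.mpr Real.pi_pos)
  have hG : Tendsto (fun n =>
      Stirling.stirlingSeq (A n) * Stirling.stirlingSeq (B n) * Stirling.stirlingSeq (C n)
        / Stirling.stirlingSeq (D n)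
        * ((k n:ℝ)*(t1+t2+t3) / (π * ((k n:ℝ)*(t1+t2+t3)+1)))) atTop
      (𝓝 (Real.sqrt π * Real.sqrt π * Real.sqrt π / Real.sqrt π * π⁻¹)) :=
    (((sA.mul sB).mul sC).div sD hπs).mul l5
  have hval : Real.sqrt π * Real.sqrt π * Real.sqrt π / Real.sqrt π * π⁻¹ = 1 := by
    rw [mul_div_assoc, div_self hπs, mul_one, Real.mul_self_sqrt Real.pi_nonneg,
      mul_inv_cancel₀ (ne_of_gt Real.pi_pos)]
  rw [hval] at hG
  refine hG.congr' ?_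
  filter_upwards [hk.eventually_ge_atTop 1, hAt.eventually_ge_atTop 1,
    hBt.eventually_ge_atTop 1, hCt.eventually_ge_atTop 1, hDt.eventually_ge_atTop 1]
    with n hk1 hA1 hB1 hC1 hD1
  have hK : (0:ℝ) < (k n : ℝ) := by exact_mod_cast hk1
  have hE := key_alg (k n) t1 t2 t3 hK h1 h2 h3 (A n) (B n) (C n) (D n)
    (hA n) (hB n) (hC n) (hD n)
  rw [← hE]
  rw [Nat.factorial_succ, Nat.cast_mul, Nat.cast_add_one,
    fact_decomp (A n) hA1, fact_decomp (B n) hB1, fact_decomp (C n) hC1,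
    fact_decomp (D n) hD1]
  have hD0 : (0:ℝ) < (D n : ℝ) := by exact_mod_cast hD1
  have nz1 : Stirling.stirlingSeq (D n) ≠ 0 := by
    have : (0:ℝ) < (D n).factorial := by exact_mod_cast (D n).factorial_pos
    rw [Stirling.stirlingSeq]
    positivity
  have nz2 : Real.sqrt (2*(D n:ℝ)) ≠ 0 := by positivity
  have nz3 : ((D n:ℝ)/Real.exp 1)^(D n) ≠ 0 := by positivity
  have nz4 : ((D n:ℝ)+1) ≠ 0 := by positivity
  have nz5 : Real.sqrt (t1*t2*t3/(t1+t2+t3)^3) ≠ 0 := by positivity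
  field_simp

theorem triangle_coefficient_asymptotics
    (j1 j2 j3 : ℝ) (hj1 : 0 < j1) (hj2 : 0 < j2) (hj3 : 0 < j3)
    (ht1 : j3 < j1 + j2) (ht2 : j2 < j1 + j3) (ht3 : j1 < j2 + j3)
    (k : ℕ → ℕ) (hk : Tendsto k atTop atTop)
    (a b c : ℕ → ℕ)
    (ha : ∀ n, (a n : ℝ) = (k n : ℝ) * j1)
    (hb : ∀ n, (b n : ℝ) = (k n : ℝ) * j2)
    (hc : ∀ n, (c n : ℝ) = (k n : ℝ) * j3) :
    Tendsto (fun n =>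
      (((a n + b n - c n).factorial * (a n + c n - b n).factorial
          * (b n + c n - a n).factorial : ℝ)
        / ((a n + b n + c n + 1).factorial : ℝ))
      / (2 * π * Real.sqrt ((j1+j2-j3)*(j1-j2+j3)*(-j1+j2+j3) / (j1+j2+j3)^3)
        * Real.exp ((k n : ℝ) *
            ((j1+j2-j3) * Real.log (j1+j2-j3) + (j1-j2+j3) * Real.log (j1-j2+j3)
              + (-j1+j2+j3) * Real.log (-j1+j2+j3)
              - (j1+j2+j3) * Real.log (j1+j2+j3)))))
      atTop (nhds 1) := by
  have key : ∀ n, c n ≤ a n + b n ∧ b n ≤ a n + c n ∧ a n ≤ b n + c n := by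
    intro n
    have hknn : (0:ℝ) ≤ (k n : ℝ) := Nat.cast_nonneg _
    refine ⟨?_, ?_, ?_⟩ <;>
    · rw [← Nat.cast_le (α := ℝ)]
      push_cast
      rw [ha, hb, hc]
      nlinarith
  exact tca_aux (j1+j2-j3) (j1-j2+j3) (-j1+j2+j3) (j1+j2+j3)
    (by linarith) (by linarith) (by linarith) (by ring) k hk
    (fun n => a n + b n - c n) (fun n => a n + c n - b n) (fun n => b n + c n - a n)
    (fun n => a n + b n + c n)
    (fun n => by
      rw [Nat.cast_sub (by push_cast; exact (key n).1)]
      push_cast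
      rw [ha, hb, hc]; ring)
    (fun n => by
      rw [Nat.cast_sub (by push_cast; exact (key n).2.1)]
      push_cast
      rw [ha, hb, hc]; ring)
    (fun n => by
      rw [Nat.cast_sub (by push_cast; exact (key n).2.2)]
      push_cast
      rw [ha, hb, hc]; ring)
    (fun n => by push_cast; rw [ha, hb, hc]; ring)
end
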